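/- Let T^1 = KR_right(S,A)^1 for a finite semigroup S generated by a finite alphabet A, let D be the Lyndon–Chiswell length function on T^1, and let ℓ = 2·max{h(s) : s ∈ S^1}. For all α, β ∈ T^1, if D(α, β) ≥ ℓ then α = β. -/

import Mathlib

open scoped Classical

namespace KRHolonomy

/-- Green's quasi-order `≤_J` on a monoid: `a ≤_J b` iff `a ∈ M b M`. -/
def leJ {M : Type*} [Monoid M] (a b : M) : Prop := ∃ x y : M, a = x * b * y

/-- `a <_J b` iff `a ≤_J b` and not `b ≤_J a`. -/
def ltJ {M : Type*} [Monoid M] (a b : M) : Prop := leJ a b ∧ ¬ leJ b a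

/-- Green's quasi-order `≤_R` on a monoid: `a ≤_R b` iff `a ∈ b M`. -/
def leR {M : Type*} [Monoid M] (a b : M) : Prop := ∃ x : M, a = b * x

/-- `a <_R b` iff `a ≤_R b` and not `b ≤_R a`. -/
def ltR {M : Type*} [Monoid M] (a b : M) : Prop := leR a b ∧ ¬ leR b a

/-- Green's quasi-order `≤_L` on a monoid: `a ≤_L b` iff `a ∈ M b`. -/
def leL {M : Type*} [Monoid M] (a b : M) : Prop := ∃ x : M, a = x * b

/-- `a <_L b` iff `a ≤_L b` and not `b ≤_L a`. -/
def ltL {M : Type*} [Monoid M] (a b : M) : Prop := leL a b ∧ ¬ leL b a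

/-- The Dedekind height function: `height x` is the largest `k` such that there is a chain
`x₀ >_J x₁ >_J ⋯ >_J x_k = x`. -/
noncomputable def height {M : Type*} [Monoid M] (x : M) : ℕ :=
  sSup {k | ∃ c : ℕ → M, c k = x ∧ ∀ i < k, ltJ (c (i + 1)) (c i)}

variable {A S : Type*} [Semigroup S]

/-- The edge `(s, a, s·θ(a))` of the right Cayley graph of `(S,A)` is a transition edge:
there is no path in the right Cayley graph from `s·θ(a)` back to `s`. -/
def IsTransitionEdge (θ : FreeMonoid A →* WithOne S) (s : WithOne S) (a : A) : Prop :=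
  ¬ ∃ w : FreeMonoid A, s * θ (FreeMonoid.of a) * θ w = s

/-- The (ordered) sequence of transition edges along the path of the right Cayley graph
starting at `s` and reading the word `u`; an edge is recorded as a pair (source, label). -/
noncomputable def transEdgesFrom (θ : FreeMonoid A →* WithOne S) :
    WithOne S → List A → List (WithOne S × A)
  | _, [] => []
  | s, a :: w =>
      (if IsTransitionEdge θ s a then [(s, a)] else []) ++
        transEdgesFrom θ (s * θ (FreeMonoid.of a)) w

/-- The sequence of transition edges of the path starting at `1` reading `u`. -/
noncomputable def transEdges (θ : FreeMonoid A →* WithOne S) (u : FreeMonoid A) :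
    List (WithOne S × A) :=
  transEdgesFrom θ 1 (FreeMonoid.toList u)

/-- The congruence (`τ_r`, together with `(1,1)`) defining the right Karnofsky–Rhodes
expansion: two words of `A^*` represent the same element of `KR_right(S,A)¹` iff they are
both empty or both nonempty, they have the same image in `S¹` and the same sequence of
transition edges. -/
def KRrel (θ : FreeMonoid A →* WithOne S) (u v : FreeMonoid A) : Prop :=
  (u = 1 ∧ v = 1) ∨
    (u ≠ 1 ∧ v ≠ 1 ∧ θ u = θ v ∧ transEdges θ u = transEdges θ v)

/-- Green's quasi-order `≤_J` on `T¹ = KR_right(S,A)¹`, expressed on word representatives: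
`u ≤_J v` iff `u = p v q` holds in `T¹` for some `p, q ∈ T¹`. -/
def leJT (θ : FreeMonoid A →* WithOne S) (u v : FreeMonoid A) : Prop :=
  ∃ p q : FreeMonoid A, KRrel θ u (p * v * q)

/-- `<_J` on `T¹ = KR_right(S,A)¹`, expressed on word representatives. -/
def ltJT (θ : FreeMonoid A →* WithOne S) (u v : FreeMonoid A) : Prop :=
  leJT θ u v ∧ ¬ leJT θ v u

/-- The Dedekind height function on `T¹ = KR_right(S,A)¹`, expressed on word
representatives: the largest `k` such that there is a chain
`t₀ >_J t₁ >_J ⋯ >_J t_k = t` in `T¹`. -/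
noncomputable def heightT (θ : FreeMonoid A →* WithOne S) (u : FreeMonoid A) : ℕ :=
  sSup {k | ∃ c : ℕ → FreeMonoid A, KRrel θ (c k) u ∧ ∀ i < k, ltJT θ (c (i + 1)) (c i)}

/-- `ℓ = 2 · max { h(s) : s ∈ S¹ }`. -/
noncomputable def ell (S : Type*) [Semigroup S] : ℕ :=
  2 * sSup (Set.range fun s : WithOne S => height s)

/-- `ξ(u,v)`: the largest `i` (with `0 ≤ i ≤ m`, `m` the number of transition edges of `u`)
such that the first `i` transition edges of `u` and of `v` agree. -/
noncomputable def xi (θ : FreeMonoid A →* WithOne S) (u v : FreeMonoid A) : ℕ :=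
  sSup {i | i ≤ (transEdges θ u).length ∧
    (transEdges θ u).take i = (transEdges θ v).take i}

/-- The endpoint of an edge `(s, a)` of the right Cayley graph, namely `s·θ(a)`. -/
def edgeEnd (θ : FreeMonoid A →* WithOne S) (e : WithOne S × A) : WithOne S :=
  e.1 * θ (FreeMonoid.of e.2)

/-- The Lyndon–Chiswell length function `D` on `T¹ = KR_right(S,A)¹`, expressed on word
representatives.  With `k = ξ(u,v)` (and indexing the transition edges from `1` as in the
paper, so that `E_k` sits at list index `k-1`):
`D(u,v) = ℓ` if `u = v` in `T¹`; `D(u,v) = 0` if `u ≠ v` in `T¹` and `k = 0`;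
`D(u,v) = 2·h(end(E_k))` if `k > 0`, `E_{k+1}` and `E'_{k+1}` both exist and have the same
endpoint; and `D(u,v) = 2·h(end(E_k)) - 1` in all remaining cases. -/
noncomputable def lcD (θ : FreeMonoid A →* WithOne S) (u v : FreeMonoid A) : ℕ :=
  if KRrel θ u v then ell S
  else if xi θ u v = 0 then 0
  else
    let k := xi θ u v
    let base := (transEdges θ u)[k - 1]?.elim 0 fun e => height (edgeEnd θ e)
    if ∃ e e', (transEdges θ u)[k]? = some e ∧ (transEdges θ v)[k]? = some e' ∧
        edgeEnd θ e = edgeEnd θ e'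
    then 2 * base
    else 2 * base - 1

/-- The relation `∼` on `C = {(k,α) : 0 ≤ k ≤ ℓ, α ∈ T¹}`:
`(k,α) ∼ (k',β)` iff `k = k'` and `D(α,β) ≥ k`. -/
def simRel (θ : FreeMonoid A →* WithOne S)
    (p q : {p : ℕ × FreeMonoid A // p.1 ≤ ell S}) : Prop :=
  p.val.1 = q.val.1 ∧ lcD θ p.val.2 q.val.2 ≥ p.val.1

/-- The vertex set of the Chiswell tree: `∼`-classes `[k,α]`. -/
def CVert (θ : FreeMonoid A →* WithOne S) : Type _ := Quot (simRel θ)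

/-- The edge relation of the Chiswell graph: the edges are `[k,α] — [k+1,α]`
for `0 ≤ k < ℓ` and `α ∈ T¹`. -/
def edgeRel (θ : FreeMonoid A →* WithOne S) (v w : CVert θ) : Prop :=
  ∃ (k : ℕ) (α : FreeMonoid A) (hk : k + 1 ≤ ell S),
    v = Quot.mk (simRel θ) ⟨(k, α), Nat.le_of_succ_le hk⟩ ∧
    w = Quot.mk (simRel θ) ⟨(k + 1, α), hk⟩

/-- The Chiswell graph `𝒞`. -/
def CGraph (θ : FreeMonoid A →* WithOne S) : SimpleGraph (CVert θ) :=
  SimpleGraph.fromRel (edgeRel θ)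

/-- The depth function of the Chiswell tree: `δ([k,α]) = k`. -/
def depth (θ : FreeMonoid A →* WithOne S) : CVert θ → ℕ :=
  Quot.lift (fun p => p.val.1) (fun _ _ h => h.1)

end KRHolonomy

namespace KRHolonomy

section Aux

lemma exists_idem_pow {M : Type*} [Monoid M] [Finite M] (u : M) :
    ∃ n, 0 < n ∧ u ^ n * u ^ n = u ^ n := by
  obtain ⟨m, n, hmn, h⟩ := Finite.exists_ne_map_eq_of_infinite (fun k : ℕ => u ^ k)
  wlog hlt : m < n generalizing m n
  · exact this n m hmn.symm h.symm (by omega)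
  set p := n - m with hp
  have hp1 : 0 < p := by omega
  have key : ∀ t, m ≤ t → u ^ (t + p) = u ^ t := by
    intro t ht
    obtain ⟨r, rfl⟩ := Nat.exists_eq_add_of_le ht
    have : m + r + p = n + r := by omega
    rw [this, pow_add, pow_add, ← h]
  have key2 : ∀ j t, m ≤ t → u ^ (t + j * p) = u ^ t := by
    intro j
    induction j with
    | zero => simp
    | succ j ih =>
      intro t ht
      have : t + (j+1) * p = (t + p) + j * p := by ring
      rw [this, ih (t + p) (by omega), key t ht]
  refine ⟨(m + 1) * p, by positivity, ?_⟩
  rw [← pow_add]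
  exact key2 (m+1) ((m+1)*p) (by nlinarith)

lemma stab {M : Type*} [Monoid M] [Finite M] {s u c : M} (h : s = u * s * c) :
    ∃ z, s = s * c * z := by
  have hn : ∀ n, s = u ^ n * s * c ^ n := by
    intro n
    induction n with
    | zero => simp
    | succ n ih =>
      calc s = u * s * c := h
      _ = u * (u ^ n * s * c ^ n) * c := by rw [← ih]
      _ = u ^ (n+1) * s * c ^ (n+1) := by
          rw [pow_succ' u, pow_succ c]; simp [mul_assoc]
  obtain ⟨n, hn1, hidem⟩ := exists_idem_pow u
  have h1 : s = u ^ n * s * c ^ n := hn n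
  have h2 : u ^ n * s = s := by
    conv_rhs => rw [h1]
    conv_lhs => rw [h1, ← mul_assoc, ← mul_assoc, hidem]
  have h3 : s = s * c ^ n := by
    calc s = u ^ n * s * c ^ n := h1
    _ = s * c ^ n := by rw [h2]
  refine ⟨c ^ (n-1), ?_⟩
  have hc : c * c ^ (n-1) = c ^ n := by
    rw [← pow_succ']; congr 1; omega
  rw [mul_assoc, hc]; exact h3

lemma leJ_refl {M : Type*} [Monoid M] (a : M) : leJ a a := ⟨1, 1, by simp⟩

lemma leJ_trans {M : Type*} [Monoid M] {a b c : M} (h1 : leJ a b) (h2 : leJ b c) :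
    leJ a c := by
  obtain ⟨x, y, rfl⟩ := h1
  obtain ⟨x', y', rfl⟩ := h2
  exact ⟨x * x', y' * y, by simp [mul_assoc]⟩

/-- The chain set defining `height`. -/
def hSet {M : Type*} [Monoid M] (x : M) : Set ℕ :=
  {k | ∃ c : ℕ → M, c k = x ∧ ∀ i < k, ltJ (c (i + 1)) (c i)}

lemma height_eq_sSup_hSet {M : Type*} [Monoid M] (x : M) : height x = sSup (hSet x) := rfl

lemma hSet_nonempty {M : Type*} [Monoid M] (x : M) : (hSet x).Nonempty :=
  ⟨0, fun _ => x, rfl, by omega⟩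

lemma chain_mono {M : Type*} [Monoid M] {k : ℕ} {c : ℕ → M}
    (hc : ∀ i < k, ltJ (c (i + 1)) (c i)) {i j : ℕ} (hij : i ≤ j) (hj : j ≤ k) :
    leJ (c j) (c i) := by
  induction j with
  | zero => have : i = 0 := by omega
            subst this; exact leJ_refl _
  | succ j ih =>
    rcases Nat.lt_or_ge i (j+1) with hlt | hge
    · exact leJ_trans (hc j (by omega)).1 (ih (by omega) (by omega))
    · have : i = j + 1 := by omega
      subst this; exact leJ_refl _

lemma hSet_le_card {M : Type*} [Monoid M] [Finite M] {x : M} {k : ℕ}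
    (hk : k ∈ hSet x) : k ≤ Nat.card M := by
  obtain ⟨c, hck, hc⟩ := hk
  have key : ∀ i j : ℕ, i < j → j ≤ k → c i ≠ c j := by
    intro i j hij hjk heq
    have h1 : leJ (c j) (c (i+1)) := chain_mono hc (by omega) (by omega)
    have h2 : ¬ leJ (c i) (c (i+1)) := (hc i (by omega)).2
    exact h2 (heq ▸ h1)
  have hinj : Function.Injective (fun i : Fin (k+1) => c i) := by
    intro i j hij
    by_contra hne
    rcases lt_trichotomy (i : ℕ) (j : ℕ) with h | h | h
    · exact key i j h (by omega) hij
    · exact hne (Fin.ext h)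
    · exact key j i h (by omega) hij.symm
  have := Nat.card_le_card_of_injective _ hinj
  simp [Nat.card_eq_fintype_card] at this
  omega

lemma hSet_bdd {M : Type*} [Monoid M] [Finite M] (x : M) : BddAbove (hSet x) :=
  ⟨Nat.card M, fun _ hk => hSet_le_card hk⟩

lemma height_mem {M : Type*} [Monoid M] [Finite M] (x : M) : height x ∈ hSet x :=
  Nat.sSup_mem (hSet_nonempty x) (hSet_bdd x)

lemma height_le_card {M : Type*} [Monoid M] [Finite M] (x : M) :
    height x ≤ Nat.card M := hSet_le_card (height_mem x)

lemma height_succ_le {M : Type*} [Monoid M] [Finite M] {a b : M} (hlt : ltJ b a) :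
    height a + 1 ≤ height b := by
  obtain ⟨c, hck, hc⟩ := height_mem a
  have hmem : height a + 1 ∈ hSet b := by
    refine ⟨fun i => if i ≤ height a then c i else b, by simp, ?_⟩
    intro i hi
    dsimp only
    rcases Nat.lt_or_ge i (height a) with h1 | h1
    · simp only [if_pos (by omega : i + 1 ≤ height a), if_pos (by omega : i ≤ height a)]
      exact hc i h1
    · rw [if_neg (by omega : ¬ i + 1 ≤ height a), if_pos (by omega : i ≤ height a),
        show i = height a by omega, hck]
      exact hlt
  exact le_csSup (hSet_bdd b) hmem

lemma height_le_sSup {M : Type*} [Monoid M] [Finite M] (x : M) :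
    height x ≤ sSup (Set.range fun s : M => height s) :=
  le_csSup ⟨Nat.card M, by rintro _ ⟨y, rfl⟩; exact height_le_card y⟩ ⟨x, rfl⟩

variable {A S : Type*} [Semigroup S]

instance instFiniteWithOne {S : Type*} [Finite S] : Finite (WithOne S) := by
  have := Fintype.ofFinite S
  exact Finite.of_fintype (Option S)

lemma mul_coe_eq_coe (x : WithOne S) (s : S) : ∃ t : S, x * (s : WithOne S) = (t : WithOne S) := by
  induction x using WithOne.recOneCoe with
  | one => exact ⟨s, one_mul _⟩
  | coe a => exact ⟨a * s, (WithOne.coe_mul a s).symm⟩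

lemma coe_mul_eq_coe (s : S) (x : WithOne S) : ∃ t : S, (s : WithOne S) * x = (t : WithOne S) := by
  induction x using WithOne.recOneCoe with
  | one => exact ⟨s, mul_one _⟩
  | coe a => exact ⟨s * a, (WithOne.coe_mul s a).symm⟩

lemma sandwich_ne_one (x y : WithOne S) (s : S) : x * (s : WithOne S) * y ≠ 1 := by
  obtain ⟨t, ht⟩ := mul_coe_eq_coe x s
  rw [ht]
  obtain ⟨r, hr⟩ := coe_mul_eq_coe t y
  rw [hr]
  exact WithOne.coe_ne_one

lemma theta_surj (θ : FreeMonoid A →* WithOne S)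
    (hgen : ∀ s : S, ∃ u : FreeMonoid A, θ u = (s : WithOne S)) :
    ∀ t : WithOne S, ∃ w : FreeMonoid A, θ w = t := by
  intro t
  induction t using WithOne.recOneCoe with
  | one => exact ⟨1, map_one θ⟩
  | coe a => exact hgen a

lemma transEdgesFrom_mem (θ : FreeMonoid A →* WithOne S) :
    ∀ (w : List A) (s : WithOne S) (e : WithOne S × A),
      e ∈ transEdgesFrom θ s w →
      IsTransitionEdge θ e.1 e.2 ∧ ∃ v : FreeMonoid A, e.1 = s * θ v := by
  intro w
  induction w with
  | nil => intro s e he; simp [transEdgesFrom] at he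
  | cons a w ih =>
    intro s e he
    rw [transEdgesFrom] at he
    rcases List.mem_append.1 he with h1 | h1
    · by_cases ht : IsTransitionEdge θ s a
      · rw [if_pos ht] at h1
        simp only [List.mem_singleton] at h1
        subst h1
        exact ⟨ht, 1, by simp⟩
      · rw [if_neg ht] at h1
        simp at h1
    · obtain ⟨htr, v, hv⟩ := ih (s * θ (FreeMonoid.of a)) e h1
      exact ⟨htr, FreeMonoid.of a * v, by rw [map_mul, ← mul_assoc, ← hv]⟩

lemma transEdgesFrom_chain' (θ : FreeMonoid A →* WithOne S) :
    ∀ (w : List A) (s : WithOne S),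
      List.Chain' (fun e e' : WithOne S × A => ∃ v : FreeMonoid A, e'.1 = edgeEnd θ e * θ v)
        (transEdgesFrom θ s w) := by
  intro w
  induction w with
  | nil => intro s; simp [transEdgesFrom, List.Chain']
  | cons a w ih =>
    intro s
    rw [transEdgesFrom]
    by_cases ht : IsTransitionEdge θ s a
    · rw [if_pos ht, List.singleton_append]
      refine List.isChain_cons.2 ⟨?_, ih _⟩
      intro y hy
      obtain ⟨_, v, hv⟩ :=
        transEdgesFrom_mem θ w (s * θ (FreeMonoid.of a)) y (List.mem_of_mem_head? hy)
      exact ⟨v, hv⟩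
    · rw [if_neg ht, List.nil_append]
      exact ih _

end Aux

end KRHolonomy

open KRHolonomy in
/-- For all `α, β ∈ T¹ = KR_right(S,A)¹`, if `D(α,β) ≥ ℓ` then `α = β`
(in `T¹`). -/
theorem eq_of_lcD_ge_ell {A S : Type*} [Finite A] [Semigroup S] [Finite S]
    (θ : FreeMonoid A →* WithOne S)
    (hgen : ∀ s : S, ∃ u : FreeMonoid A, θ u = (s : WithOne S))
    (hproper : ∀ u : FreeMonoid A, θ u = 1 → u = 1)
    (α β : FreeMonoid A) (h : lcD θ α β ≥ ell S) :
    KRrel θ α β := by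
  classical
  rcases isEmpty_or_nonempty S with hS | hS
  · have hone : ∀ t : WithOne S, t = 1 := by
      intro t; by_contra ht
      obtain ⟨a, -⟩ := WithOne.ne_one_iff_exists.1 ht
      exact hS.elim a
    exact Or.inl ⟨hproper α (hone _), hproper β (hone _)⟩
  by_contra hK
  set H := sSup (Set.range fun s : WithOne S => height s) with hH
  obtain ⟨s0⟩ := hS
  have hone1 : (1 : ℕ) ∈ hSet ((s0 : WithOne S)) := by
    refine ⟨fun i => if i = 0 then 1 else (s0 : WithOne S), by simp, ?_⟩
    intro i hi
    have hi0 : i = 0 := by omega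
    subst hi0
    simp only [if_pos rfl, if_neg (by omega : (0:ℕ) + 1 ≠ 0)]
    refine ⟨⟨(s0 : WithOne S), 1, by simp⟩, ?_⟩
    rintro ⟨x, y, hxy⟩
    exact sandwich_ne_one x y s0 hxy.symm
  have hH1 : 1 ≤ H :=
    le_trans (le_csSup (hSet_bdd _) hone1) (height_le_sSup ((s0 : WithOne S)))
  have hell : ell S = 2 * H := rfl
  rw [lcD, if_neg hK] at h
  by_cases hxi : xi θ α β = 0
  · rw [if_pos hxi] at h
    omega
  · rw [if_neg hxi] at h
    dsimp only at h
    have hkmem : xi θ α β ∈ {i | i ≤ (transEdges θ α).length ∧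
        (transEdges θ α).take i = (transEdges θ β).take i} :=
      Nat.sSup_mem ⟨0, by simp⟩ ⟨(transEdges θ α).length, fun i hi => hi.1⟩
    obtain ⟨hklen, -⟩ := hkmem
    have hk1 : 1 ≤ xi θ α β := Nat.one_le_iff_ne_zero.2 hxi
    have hlt : xi θ α β - 1 < (transEdges θ α).length := by omega
    have hEk : (transEdges θ α)[xi θ α β - 1]? = some ((transEdges θ α)[xi θ α β - 1]'hlt) :=
      List.getElem?_eq_getElem hlt
    set e : WithOne S × A := (transEdges θ α)[xi θ α β - 1]'hlt with he
    rw [hEk] at h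
    simp only [Option.elim_some] at h
    have hbase_le : height (edgeEnd θ e) ≤ H := height_le_sSup _
    by_cases hex : ∃ e₂ e₂', (transEdges θ α)[xi θ α β]? = some e₂ ∧
        (transEdges θ β)[xi θ α β]? = some e₂' ∧ edgeEnd θ e₂ = edgeEnd θ e₂'
    · rw [if_pos hex] at h
      obtain ⟨e₂, e₂', h₂, -, -⟩ := hex
      have hbase : H ≤ height (edgeEnd θ e) := by omega
      have hklt : xi θ α β < (transEdges θ α).length := (List.getElem?_eq_some_iff.1 h₂).1
      have he₂ : e₂ = (transEdges θ α)[xi θ α β]'hklt := by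
        have := List.getElem?_eq_getElem hklt
        rw [h₂] at this
        exact Option.some_injective _ this
      -- adjacency from the chain' property
      have hchain := transEdgesFrom_chain' θ (FreeMonoid.toList α) 1
      rw [show transEdgesFrom θ 1 (FreeMonoid.toList α) = transEdges θ α from rfl] at hchain
      unfold List.Chain' at hchain
      rw [List.isChain_iff_getElem] at hchain
      have hadj : ∃ v : FreeMonoid A, e₂.1 = edgeEnd θ e * θ v := by
        have := hchain (xi θ α β - 1) (by
          show xi θ α β - 1 + 1 < (transEdges θ α).length
          omega)
        simpa only [List.get_eq_getElem, show xi θ α β - 1 + 1 = xi θ α β by omega,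
          ← he, ← he₂] using this
      obtain ⟨v, hv⟩ := hadj
      have hmem₂ : e₂ ∈ transEdges θ α := by
        rw [he₂]; exact List.getElem_mem _
      obtain ⟨htr₂, -⟩ := transEdgesFrom_mem θ (FreeMonoid.toList α) 1 e₂ hmem₂
      -- e₂'s endpoint is strictly J-below e's endpoint
      have hltJ : ltJ (edgeEnd θ e₂) (edgeEnd θ e) := by
        constructor
        · exact ⟨1, θ v * θ (FreeMonoid.of e₂.2), by
            simp only [edgeEnd, hv, one_mul, mul_assoc]⟩
        · rintro ⟨p, q, hpq⟩
          have hs' : e₂.1 = p * e₂.1 * (θ (FreeMonoid.of e₂.2) * q * θ v) := by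
            calc e₂.1 = edgeEnd θ e * θ v := hv
            _ = (p * edgeEnd θ e₂ * q) * θ v := by rw [← hpq]
            _ = p * e₂.1 * (θ (FreeMonoid.of e₂.2) * q * θ v) := by
                simp only [edgeEnd, mul_assoc]
          obtain ⟨z, hz⟩ := stab hs'
          obtain ⟨w, hw⟩ := theta_surj θ hgen (q * θ v * z)
          refine htr₂ ⟨w, ?_⟩
          rw [hw]
          calc e₂.1 * θ (FreeMonoid.of e₂.2) * (q * θ v * z)
              = e₂.1 * (θ (FreeMonoid.of e₂.2) * q * θ v) * z := by
                simp only [mul_assoc]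
            _ = e₂.1 := hz.symm
      have hup : height (edgeEnd θ e) + 1 ≤ height (edgeEnd θ e₂) := height_succ_le hltJ
      have : height (edgeEnd θ e₂) ≤ H := height_le_sSup _
      omega
    · rw [if_neg hex] at h
      omega
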